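/- Let Q_1, …, Q_N be d×d Hermitian unitary complex matrices, p_1, …, p_N real numbers, g a real number, ρ and O arbitrary d×d complex matrices. For each i let N_i^{(g)}(A) = (1 − g p_i) A + g p_i Q_i A Q_i, and for S ⊆ {1, …, N} let 𝒬_S denote the composition of the conjugation maps A ↦ Q_i A Q_i over i ∈ S (in increasing order of i). Then Tr(ρ · (N_N^{(g)} ∘ ⋯ ∘ N_1^{(g)})(O)) = ∑_{T ⊆ {1,…,N}} g^{|T|} (∏_{i∈T} p_i) G_T, where G_T = ∑_{S ⊆ T} (−1)^{|T| − |S|} Tr(ρ · 𝒬_S(O)). -/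

import Mathlib

open Matrix Finset

private lemma fold_congr {d : ℕ} {α : Type*} [DecidableEq α] (Q : α → Matrix (Fin d) (Fin d) ℂ)
    (S S' : Finset α) (l : List α)
    (h : ∀ i ∈ l, (i ∈ S ↔ i ∈ S')) (O : Matrix (Fin d) (Fin d) ℂ) :
    l.foldl (fun A i => if i ∈ S then Q i * A * Q i else A) O
      = l.foldl (fun A i => if i ∈ S' then Q i * A * Q i else A) O := by
  induction l generalizing O with
  | nil => rfl
  | cons j t ih =>
    simp only [List.foldl_cons]
    rw [ih (fun i hi => h i (List.mem_cons_of_mem _ hi))]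
    congr 1
    have := h j (List.mem_cons_self (a := j) (l := t))
    by_cases hj : j ∈ S
    · rw [if_pos hj, if_pos (this.mp hj)]
    · rw [if_neg hj, if_neg (fun h' => hj (this.mpr h'))]

private lemma fold_smul_add {d : ℕ} {α : Type*} [DecidableEq α]
    (Q : α → Matrix (Fin d) (Fin d) ℂ)
    (S : Finset α) (l : List α) (x y : ℂ) (A B : Matrix (Fin d) (Fin d) ℂ) :
    l.foldl (fun A i => if i ∈ S then Q i * A * Q i else A) (x • A + y • B)
      = x • l.foldl (fun A i => if i ∈ S then Q i * A * Q i else A) A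
        + y • l.foldl (fun A i => if i ∈ S then Q i * A * Q i else A) B := by
  induction l generalizing A B with
  | nil => rfl
  | cons j t ih =>
    simp only [List.foldl_cons]
    rw [show (if j ∈ S then Q j * (x • A + y • B) * Q j else (x • A + y • B))
        = x • (if j ∈ S then Q j * A * Q j else A) + y • (if j ∈ S then Q j * B * Q j else B) by
      by_cases hj : j ∈ S <;>
        simp [hj, Matrix.mul_add, Matrix.add_mul, Matrix.mul_smul, Matrix.smul_mul]]
    exact ih _ _

private lemma fold_expand {d : ℕ} {α : Type*} [DecidableEq α]
    (Q : α → Matrix (Fin d) (Fin d) ℂ)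
    (a b : α → ℂ) (l : List α) (hl : l.Nodup) (O : Matrix (Fin d) (Fin d) ℂ) :
    l.foldl (fun A i => a i • A + b i • (Q i * A * Q i)) O
      = ∑ S ∈ l.toFinset.powerset,
          ((∏ i ∈ S, b i) * ∏ i ∈ l.toFinset \ S, a i) •
            l.foldl (fun A i => if i ∈ S then Q i * A * Q i else A) O := by
  induction l generalizing O with
  | nil => simp
  | cons j t ih =>
    obtain ⟨hj, ht⟩ := List.nodup_cons.mp hl
    have hjF : j ∉ t.toFinset := by simpa using hj
    simp only [List.foldl_cons, List.toFinset_cons]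
    rw [ih ht]
    rw [Finset.sum_powerset_insert hjF]
    have key : ∀ S ∈ t.toFinset.powerset,
        ((∏ i ∈ S, b i) * ∏ i ∈ t.toFinset \ S, a i) •
          t.foldl (fun A i => if i ∈ S then Q i * A * Q i else A)
            (a j • O + b j • (Q j * O * Q j))
        = ((∏ i ∈ S, b i) * ∏ i ∈ insert j t.toFinset \ S, a i) •
            t.foldl (fun A i => if i ∈ S then Q i * A * Q i else A)
              (if j ∈ S then Q j * O * Q j else O)
          + ((∏ i ∈ insert j S, b i) * ∏ i ∈ insert j t.toFinset \ insert j S, a i) •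
            t.foldl (fun A i => if i ∈ insert j S then Q i * A * Q i else A)
              (if j ∈ insert j S then Q j * O * Q j else O) := by
      intro S hS
      have hS' : S ⊆ t.toFinset := Finset.mem_powerset.mp hS
      have hjS : j ∉ S := fun h => hjF (hS' h)
      have h1 : insert j t.toFinset \ S = insert j (t.toFinset \ S) := by
        rw [Finset.insert_sdiff_of_notMem _ hjS]
      have h2 : insert j t.toFinset \ insert j S = t.toFinset \ S := by
        ext x
        simp only [Finset.mem_sdiff, Finset.mem_insert]
        constructor
        · rintro ⟨hx1 | hx2, hx3⟩
          · exact absurd (Or.inl hx1) hx3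
          · exact ⟨hx2, fun hx => hx3 (Or.inr hx)⟩
        · rintro ⟨hx1, hx2⟩
          exact ⟨Or.inr hx1, fun hx => hx.elim (fun h => hjF (h ▸ hx1)) hx2⟩
      have h3 : j ∉ t.toFinset \ S := fun h => hjF (Finset.mem_sdiff.mp h).1
      rw [if_neg hjS, if_pos (Finset.mem_insert_self j S), h1, h2,
        Finset.prod_insert h3, Finset.prod_insert hjS,
        fold_congr Q (insert j S) S t
          (fun i hi => by
            simp only [Finset.mem_insert]
            constructor
            · rintro (rfl | h)
              · exact absurd hi hj
              · exact h
            · exact Or.inr)]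
      rw [fold_smul_add, smul_add, smul_smul, smul_smul,
        show ((∏ i ∈ S, b i) * ∏ i ∈ t.toFinset \ S, a i) * a j
          = (∏ i ∈ S, b i) * (a j * ∏ x ∈ t.toFinset \ S, a x) by ring,
        show ((∏ i ∈ S, b i) * ∏ i ∈ t.toFinset \ S, a i) * b j
          = (b j * ∏ x ∈ S, b x) * ∏ i ∈ t.toFinset \ S, a i by ring]
    rw [Finset.sum_congr rfl key, Finset.sum_add_distrib]
private lemma prod_neg' {α : Type*} (s : Finset α) (c : α → ℂ) :
    ∏ i ∈ s, (-c i) = (-1 : ℂ) ^ s.card * ∏ i ∈ s, c i := by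
  rw [← Finset.prod_const, ← Finset.prod_mul_distrib]
  simp [neg_one_mul]

private lemma scalar_identity {α : Type*} [Fintype α] [DecidableEq α]
    (c : α → ℂ) (F : Finset α → ℂ) :
    ∑ S ∈ (univ : Finset α).powerset,
        ((∏ i ∈ S, c i) * ∏ i ∈ univ \ S, (1 - c i)) * F S
      = ∑ T ∈ (univ : Finset α).powerset, (∏ i ∈ T, c i) *
          ∑ S ∈ T.powerset, (-1 : ℂ) ^ (T.card - S.card) * F S := by
  have expand1 : ∀ S : Finset α,
      ((∏ i ∈ S, c i) * ∏ i ∈ univ \ S, (1 - c i)) * F S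
        = ∑ U ∈ (univ \ S).powerset, (∏ i ∈ S, c i) * (∏ i ∈ U, (-c i)) * F S := by
    intro S
    have : ∏ i ∈ univ \ S, (1 - c i) = ∑ U ∈ (univ \ S).powerset, ∏ i ∈ U, (-c i) := by
      have := Finset.prod_add (fun i => -c i) (fun _ => (1 : ℂ)) (univ \ S)
      simp only [Finset.prod_const_one, mul_one] at this
      rw [← this]
      apply Finset.prod_congr rfl
      intro i _
      ring
    rw [this, Finset.mul_sum, Finset.sum_mul]
  rw [Finset.sum_congr rfl (fun S _ => expand1 S)]
  simp_rw [Finset.mul_sum]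
  rw [Finset.sum_sigma' (univ : Finset α).powerset (fun S => (univ \ S).powerset)
    (fun S U => (∏ i ∈ S, c i) * (∏ i ∈ U, (-c i)) * F S)]
  rw [Finset.sum_sigma' (univ : Finset α).powerset (fun T => T.powerset)
    (fun T S => (∏ i ∈ T, c i) * ((-1 : ℂ) ^ (T.card - S.card) * F S))]
  refine Finset.sum_nbij' (fun x => ⟨x.1 ∪ x.2, x.1⟩) (fun y => ⟨y.2, y.1 \ y.2⟩)
    ?_ ?_ ?_ ?_ ?_
  · rintro ⟨S, U⟩ hx
    simp only [Finset.mem_sigma, Finset.mem_powerset] at hx ⊢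
    exact ⟨Finset.subset_univ _, Finset.subset_union_left⟩
  · rintro ⟨T, S⟩ hy
    simp only [Finset.mem_sigma, Finset.mem_powerset] at hy ⊢
    exact ⟨Finset.subset_univ _, fun x hx => by
      simp only [Finset.mem_sdiff] at hx ⊢
      exact ⟨Finset.mem_univ x, hx.2⟩⟩
  · rintro ⟨S, U⟩ hx
    simp only [Finset.mem_sigma, Finset.mem_powerset] at hx
    have hdisj : Disjoint S U := by
      rw [Finset.disjoint_left]
      intro x hxS hxU
      exact (Finset.mem_sdiff.mp (hx.2 hxU)).2 hxS
    have : (S ∪ U) \ S = U := Finset.union_sdiff_cancel_left hdisj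
    exact Sigma.ext rfl (heq_of_eq this)
  · rintro ⟨T, S⟩ hy
    simp only [Finset.mem_sigma, Finset.mem_powerset] at hy
    have : S ∪ (T \ S) = T := Finset.union_sdiff_of_subset hy.2
    exact Sigma.ext this HEq.rfl
  · rintro ⟨S, U⟩ hx
    simp only [Finset.mem_sigma, Finset.mem_powerset] at hx
    have hdisj : Disjoint S U := by
      rw [Finset.disjoint_left]
      intro x hxS hxU
      exact (Finset.mem_sdiff.mp (hx.2 hxU)).2 hxS
    have hcard : (S ∪ U).card = S.card + U.card := Finset.card_union_of_disjoint hdisj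
    have hprod : ∏ i ∈ S ∪ U, c i = (∏ i ∈ S, c i) * ∏ i ∈ U, c i :=
      Finset.prod_union hdisj
    simp only
    rw [hprod, prod_neg' U c, hcard, Nat.add_sub_cancel_left]
    ring


set_option maxHeartbeats 800000 in
/-- **Polynomial expansion of the noisy expectation value in the gain `g`.**
Let `Q 1, …, Q N` be Hermitian unitary `d×d` complex matrices, `p i` and `g` real,
`ρ, O` arbitrary `d×d` complex matrices.  With the amplified Pauli channels
`N_i^{(g)} A = (1 − g p i) A + g p i Q i A Q i` and, for `S ⊆ {1, …, N}`, the
composition `𝒬_S` of the conjugations `A ↦ Q i A Q i` over `i ∈ S` (in increasing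
`i`), one has
`Tr(ρ (N_N^{(g)} ∘ ⋯ ∘ N_1^{(g)})(O)) = ∑_{T} g^{|T|} (∏_{i∈T} p i) G_T` where
`G_T = ∑_{S ⊆ T} (−1)^{|T|−|S|} Tr(ρ 𝒬_S(O))`. -/
theorem noisy_expectation_polynomial_expansion (d N : ℕ)
    (Q : Fin N → Matrix (Fin d) (Fin d) ℂ)
    (hQ_herm : ∀ i, (Q i)ᴴ = Q i) (hQ_unit : ∀ i, Q i * Q i = 1)
    (p : Fin N → ℝ) (g : ℝ)
    (ρ O : Matrix (Fin d) (Fin d) ℂ) :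
    (ρ * (List.finRange N).foldl
        (fun A i => (1 - (g * p i : ℝ)) • A + ((g * p i : ℝ) : ℂ) • (Q i * A * Q i)) O).trace
      = ∑ T ∈ (Finset.univ : Finset (Fin N)).powerset,
          (g : ℂ) ^ T.card * (∏ i ∈ T, (p i : ℂ)) *
          ∑ S ∈ T.powerset, (-1 : ℂ) ^ (T.card - S.card) *
            (ρ * (List.finRange N).foldl
                (fun A i => if i ∈ S then Q i * A * Q i else A) O).trace := by
  have hstep : (fun (A : Matrix (Fin d) (Fin d) ℂ) (i : Fin N) =>
      (1 - (g * p i : ℝ)) • A + ((g * p i : ℝ) : ℂ) • (Q i * A * Q i))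
      = fun A i => (((1 - g * p i : ℝ) : ℂ)) • A + (((g * p i : ℝ)) : ℂ) • (Q i * A * Q i) := by
    funext A i
    congr 1
  rw [hstep, fold_expand Q _ _ _ (List.nodup_finRange N) O]
  rw [Matrix.mul_sum, trace_sum]
  simp only [Matrix.mul_smul, trace_smul, smul_eq_mul, List.toFinset_finRange]
  have := scalar_identity (fun i => ((g : ℂ) * (p i : ℂ))) (fun S =>
    (ρ * (List.finRange N).foldl (fun A i => if i ∈ S then Q i * A * Q i else A) O).trace)
  rw [show ∑ S ∈ (univ : Finset (Fin N)).powerset,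
      ((∏ i ∈ S, ((g * p i : ℝ) : ℂ)) * ∏ i ∈ univ \ S, ((1 - g * p i : ℝ) : ℂ)) *
        (ρ * (List.finRange N).foldl (fun A i => if i ∈ S then Q i * A * Q i else A) O).trace
      = ∑ S ∈ (univ : Finset (Fin N)).powerset,
      ((∏ i ∈ S, (g : ℂ) * (p i : ℂ)) * ∏ i ∈ univ \ S, (1 - (g : ℂ) * (p i : ℂ))) *
        (ρ * (List.finRange N).foldl (fun A i => if i ∈ S then Q i * A * Q i else A) O).trace
    from Finset.sum_congr rfl (fun S _ => by push_cast; ring_nf)]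
  rw [this]
  apply Finset.sum_congr rfl
  intro T _
  congr 1
  rw [Finset.prod_mul_distrib, Finset.prod_const]
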